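/- Let N ≥ 3, α > 0, 0 < μ < 2. For each mass M > 0 there is a unique ω > α²/N² such that M(ω) = M, where M(ω) = N (μ+1)^{1/μ}/μ · ω^{1/μ-1/2} · ∫_{α/(N√ω)}^1 (1-t²)^{1/μ-1} dt. -/

import Mathlib

open Real

/-- The mass of the symmetric stationary state of frequency `ω` on the `N`-star graph with
attractive delta of strength `α` at the vertex. -/
noncomputable def massFn (N : ℕ) (α μ : ℝ) (ω : ℝ) : ℝ :=
  N * (μ + 1) ^ (1 / μ) / μ * ω ^ (1 / μ - 1 / 2) *
    ∫ t in (α / (N * Real.sqrt ω))..1, (1 - t ^ 2) ^ (1 / μ - 1)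

namespace MassFnAux

variable {q : ℝ}

lemma integrand_nonneg (q : ℝ) {t : ℝ} (ht : -1 ≤ t) (ht1 : t ≤ 1) :
    0 ≤ (1 - t ^ 2) ^ q :=
  Real.rpow_nonneg (by nlinarith) q

lemma integrand_pos (q : ℝ) {t : ℝ} (ht : -1 < t) (ht1 : t < 1) :
    0 < (1 - t ^ 2) ^ q :=
  Real.rpow_pos_of_pos (by nlinarith) q

lemma integrable (hq : -1 < q) {x : ℝ} (hx : 0 ≤ x) (hx1 : x ≤ 1) :
    IntervalIntegrable (fun t => (1 - t ^ 2) ^ q) MeasureTheory.volume x 1 := by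
  have base : IntervalIntegrable (fun t => (1 - t ^ 2) ^ q) MeasureTheory.volume 0 1 := by
    have hg0 : IntervalIntegrable (fun t : ℝ => t ^ q) MeasureTheory.volume 0 1 :=
      intervalIntegral.intervalIntegrable_rpow' hq
    have hg1 : IntervalIntegrable (fun t : ℝ => (1 - t) ^ q) MeasureTheory.volume 1 0 := by
      simpa using hg0.comp_sub_left 1
    have hg : IntervalIntegrable (fun t : ℝ => max 1 (2 ^ q) * (1 - t) ^ q)
        MeasureTheory.volume 0 1 := (hg1.symm).const_mul _
    refine hg.mono_fun ?_ ?_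
    · rw [Set.uIoc_of_le (zero_le_one : (0:ℝ) ≤ 1),
        ← MeasureTheory.Measure.restrict_congr_set MeasureTheory.Ioo_ae_eq_Ioc]
      refine ContinuousOn.aestronglyMeasurable ?_ measurableSet_Ioo
      apply ContinuousOn.rpow_const ((continuous_const.sub (continuous_pow 2)).continuousOn)
      intro t ht
      left
      simp only [Pi.sub_apply]; nlinarith [ht.1, ht.2]
    · rw [Set.uIoc_of_le (zero_le_one : (0:ℝ) ≤ 1)]
      filter_upwards [MeasureTheory.ae_restrict_mem measurableSet_Ioc] with t ht
      obtain ⟨ht0, ht1⟩ := ht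
      have h1t : (0:ℝ) ≤ 1 - t := by linarith
      have h1t' : (0:ℝ) ≤ 1 + t := by linarith
      have hfactor : (1 - t ^ 2 : ℝ) = (1 - t) * (1 + t) := by ring
      have habs : |(1 - t ^ 2) ^ q| = (1 - t) ^ q * (1 + t) ^ q := by
        rw [abs_of_nonneg (integrand_nonneg q (by linarith) ht1), hfactor,
          Real.mul_rpow h1t h1t']
      simp only [Real.norm_eq_abs]
      rw [habs, abs_of_nonneg (by positivity)]
      have hbound : (1 + t) ^ q ≤ max 1 (2 ^ q) := by
        rcases le_or_gt 0 q with hq0 | hq0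
        · exact le_trans (Real.rpow_le_rpow h1t' (by linarith) hq0) (le_max_right _ _)
        · exact le_trans (Real.rpow_le_one_of_one_le_of_nonpos (by linarith) hq0.le)
            (le_max_left _ _)
      calc (1 - t) ^ q * (1 + t) ^ q ≤ (1 - t) ^ q * max 1 (2 ^ q) :=
            mul_le_mul_of_nonneg_left hbound (Real.rpow_nonneg h1t q)
        _ = max 1 (2 ^ q) * (1 - t) ^ q := by ring
  exact base.mono_set (by rw [Set.uIcc_of_le hx1, Set.uIcc_of_le zero_le_one]
                          exact Set.Icc_subset_Icc hx le_rfl)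

lemma G_pos (hq : -1 < q) {x : ℝ} (hx : 0 ≤ x) (hx1 : x < 1) :
    0 < ∫ t in x..1, (1 - t ^ 2) ^ q := by
  refine intervalIntegral.intervalIntegral_pos_of_pos_on (integrable hq hx hx1.le) ?_ hx1
  intro t ht
  exact integrand_pos q (by linarith [ht.1]) ht.2

lemma G_lt (hq : -1 < q) {x y : ℝ} (hx : 0 ≤ x) (hxy : x < y) (hy1 : y ≤ 1) :
    (∫ t in y..1, (1 - t ^ 2) ^ q) < ∫ t in x..1, (1 - t ^ 2) ^ q := by
  have hxy' : IntervalIntegrable (fun t => (1 - t ^ 2) ^ q) MeasureTheory.volume x y := by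
    refine (integrable hq hx (hxy.le.trans hy1)).mono_set ?_
    rw [Set.uIcc_of_le hxy.le, Set.uIcc_of_le (hxy.le.trans hy1)]
    exact Set.Icc_subset_Icc le_rfl hy1
  have hy1' : IntervalIntegrable (fun t => (1 - t ^ 2) ^ q) MeasureTheory.volume y 1 :=
    integrable hq (hx.trans hxy.le) hy1
  have hsplit := intervalIntegral.integral_add_adjacent_intervals hxy' hy1'
  have hpos : 0 < ∫ t in x..y, (1 - t ^ 2) ^ q := by
    refine intervalIntegral.intervalIntegral_pos_of_pos_on hxy' ?_ hxy
    intro t ht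
    exact integrand_pos q (by linarith [ht.1]) (lt_of_lt_of_le ht.2 hy1)
  linarith [hsplit]

lemma G_le (hq : -1 < q) {x y : ℝ} (hx : 0 ≤ x) (hxy : x ≤ y) (hy1 : y ≤ 1) :
    (∫ t in y..1, (1 - t ^ 2) ^ q) ≤ ∫ t in x..1, (1 - t ^ 2) ^ q := by
  rcases eq_or_lt_of_le hxy with rfl | h
  · exact le_rfl
  · exact (G_lt hq hx h hy1).le

lemma G_nonneg (hq : -1 < q) {x : ℝ} (hx : 0 ≤ x) (hx1 : x ≤ 1) :
    0 ≤ ∫ t in x..1, (1 - t ^ 2) ^ q := by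
  rcases eq_or_lt_of_le hx1 with rfl | h
  · simp
  · exact (G_pos hq hx h).le

lemma G_continuousOn (hq : -1 < q) :
    ContinuousOn (fun x => ∫ t in x..1, (1 - t ^ 2) ^ q) (Set.Icc 0 1) := by
  have h : MeasureTheory.IntegrableOn (fun t => (1 - t ^ 2) ^ q) (Set.uIcc (0:ℝ) 1)
      MeasureTheory.volume := by
    rw [← intervalIntegrable_iff']
    exact integrable hq le_rfl zero_le_one
  simpa [Set.uIcc_of_le (zero_le_one : (0:ℝ) ≤ 1)] using
    intervalIntegral.continuousOn_primitive_interval_left h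

end MassFnAux

theorem massFn_bijective (N : ℕ) (hN : 3 ≤ N) (α μ : ℝ)
    (hα : 0 < α) (hμ : 0 < μ) (hμ2 : μ < 2) :
    ∀ M : ℝ, 0 < M → ∃! ω : ℝ, α ^ 2 / N ^ 2 < ω ∧ massFn N α μ ω = M := by
  intro M hM
  have hNr : (0:ℝ) < N := by exact_mod_cast Nat.lt_of_lt_of_le (by norm_num) hN
  set q : ℝ := 1 / μ - 1 with hq_def
  set p : ℝ := 1 / μ - 1 / 2 with hp_def
  have h2μ : (1:ℝ)/2 < 1/μ := one_div_lt_one_div_of_lt hμ hμ2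
  have hq : -1 < q := by rw [hq_def]; linarith
  have hp : 0 < p := by rw [hp_def]; linarith
  set C : ℝ := N * (μ + 1) ^ (1 / μ) / μ with hC_def
  have hC : 0 < C := by
    apply div_pos _ hμ
    exact mul_pos hNr (Real.rpow_pos_of_pos (by linarith) _)
  set a : ℝ := α ^ 2 / (N:ℝ) ^ 2 with ha_def
  have ha : 0 < a := by positivity
  set x : ℝ → ℝ := fun ω => α / (N * Real.sqrt ω) with hx_def
  set G : ℝ → ℝ := fun y => ∫ t in y..1, (1 - t ^ 2) ^ q with hG_def
  have hmass : ∀ ω, massFn N α μ ω = C * ω ^ p * G (x ω) := fun ω => rfl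
  have hsqrta : Real.sqrt a = α / N := by
    rw [ha_def, show α ^ 2 / (N:ℝ) ^ 2 = (α / N) ^ 2 by ring,
      Real.sqrt_sq (by positivity)]
  have hxa : x a = 1 := by
    rw [hx_def]
    simp only
    rw [hsqrta]
    field_simp
  -- basic facts about x on Ici a
  have hxpos : ∀ ω, a ≤ ω → 0 < x ω := by
    intro ω hω
    have hω0 : 0 < ω := lt_of_lt_of_le ha hω
    exact div_pos hα (mul_pos hNr (Real.sqrt_pos.mpr hω0))
  have hxanti : ∀ ω₁ ω₂, a ≤ ω₁ → ω₁ < ω₂ → x ω₂ < x ω₁ := by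
    intro ω₁ ω₂ h1 h12
    have hω1 : 0 < ω₁ := lt_of_lt_of_le ha h1
    apply div_lt_div_of_pos_left hα (mul_pos hNr (Real.sqrt_pos.mpr hω1))
    exact mul_lt_mul_of_pos_left ((Real.sqrt_lt_sqrt hω1.le h12)) hNr
  have hxle1 : ∀ ω, a ≤ ω → x ω ≤ 1 := by
    intro ω hω
    rcases eq_or_lt_of_le hω with rfl | h
    · exact hxa.le
    · exact le_of_lt (hxa ▸ hxanti a ω le_rfl h)
  -- strict monotonicity on Ici a
  have hGx_nonneg : ∀ ω, a ≤ ω → 0 ≤ G (x ω) := fun ω hω =>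
    MassFnAux.G_nonneg hq (hxpos ω hω).le (hxle1 ω hω)
  have hmono : StrictMonoOn (massFn N α μ) (Set.Ici a) := by
    intro ω₁ h1 ω₂ h2 h12
    rw [hmass, hmass]
    have hω1 : 0 < ω₁ := lt_of_lt_of_le ha h1
    have hω2 : 0 < ω₂ := lt_of_lt_of_le ha h2
    have hGlt : G (x ω₁) < G (x ω₂) :=
      MassFnAux.G_lt hq (hxpos ω₂ h2).le (hxanti ω₁ ω₂ h1 h12) (hxle1 ω₁ h1)
    calc C * ω₁ ^ p * G (x ω₁) ≤ C * ω₂ ^ p * G (x ω₁) := by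
          apply mul_le_mul_of_nonneg_right _ (hGx_nonneg ω₁ h1)
          exact mul_le_mul_of_nonneg_left
            (Real.rpow_le_rpow hω1.le h12.le hp.le) hC.le
      _ < C * ω₂ ^ p * G (x ω₂) := by
          apply mul_lt_mul_of_pos_left hGlt
          exact mul_pos hC (Real.rpow_pos_of_pos hω2 p)
  -- value at the left endpoint
  have hmassa : massFn N α μ a = 0 := by
    rw [hmass, hxa, hG_def]
    simp
  -- continuity on Ici a
  have hcont : ContinuousOn (massFn N α μ) (Set.Ici a) := by
    have h1 : ContinuousOn (fun ω : ℝ => C * ω ^ p) (Set.Ici a) := by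
      apply continuousOn_const.mul
      intro ω hω
      exact (Real.continuousAt_rpow_const ω p
        (Or.inl (ne_of_gt (lt_of_lt_of_le ha hω)))).continuousWithinAt
    have hxcont : ContinuousOn x (Set.Ici a) := by
      apply continuousOn_const.div
        ((continuous_const.mul Real.continuous_sqrt).continuousOn)
      intro ω hω
      exact ne_of_gt (mul_pos hNr (Real.sqrt_pos.mpr (lt_of_lt_of_le ha hω)))
    have hGcont : ContinuousOn G (Set.Icc 0 1) := MassFnAux.G_continuousOn hq
    have hmaps : Set.MapsTo x (Set.Ici a) (Set.Icc 0 1) := fun ω hω =>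
      ⟨(hxpos ω hω).le, hxle1 ω hω⟩
    have := h1.mul (hGcont.comp hxcont hmaps)
    refine ContinuousOn.congr this ?_
    intro ω _
    rw [hmass]
    rfl
  -- find b with massFn b > M
  set g0 : ℝ := G (1/2) with hg0_def
  have hg0 : 0 < g0 := MassFnAux.G_pos hq (by norm_num) (by norm_num)
  have hx4a : x (4 * a) = 1 / 2 := by
    rw [hx_def]
    simp only
    rw [show (4:ℝ) * a = 2^2 * a by norm_num, Real.sqrt_mul (by positivity),
      Real.sqrt_sq (by norm_num : (0:ℝ) ≤ 2), hsqrta]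
    field_simp
  obtain ⟨b, hb⟩ := ((tendsto_rpow_atTop hp).eventually_gt_atTop (M / (C * g0))).and
    (Filter.eventually_ge_atTop (4 * a)) |>.exists
  obtain ⟨hbp, hb4a⟩ := hb
  have hab : a ≤ b := le_trans (by linarith) hb4a
  have hbM : M < massFn N α μ b := by
    have hxb : x b ≤ 1 / 2 := by
      rcases eq_or_lt_of_le hb4a with h | h
      · rw [← h, hx4a]
      · exact le_of_lt (hx4a ▸ hxanti (4 * a) b (by linarith) h)
    have hGb : g0 ≤ G (x b) := MassFnAux.G_le hq (hxpos b hab).le hxb (by norm_num)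
    have hb0 : 0 < b := lt_of_lt_of_le ha hab
    have h1 : M < C * b ^ p * g0 := by
      rw [div_lt_iff₀ (by positivity)] at hbp
      calc M < b ^ p * (C * g0) := hbp
        _ = C * b ^ p * g0 := by ring
    calc M < C * b ^ p * g0 := h1
      _ ≤ C * b ^ p * G (x b) := by
          apply mul_le_mul_of_nonneg_left hGb
          positivity
      _ = massFn N α μ b := (hmass b).symm
  -- intermediate value theorem
  have hIcc : Set.Icc a b ⊆ Set.Ici a := fun y hy => hy.1
  have hIVT := intermediate_value_Icc hab (hcont.mono hIcc)
  have hMmem : M ∈ Set.Icc (massFn N α μ a) (massFn N α μ b) := by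
    rw [hmassa]; exact ⟨hM.le, hbM.le⟩
  obtain ⟨ω, hωmem, hωM⟩ := hIVT hMmem
  have hωa : a < ω := by
    rcases eq_or_lt_of_le hωmem.1 with h | h
    · exfalso; rw [← h, hmassa] at hωM; linarith
    · exact h
  refine ⟨ω, ⟨hωa, hωM⟩, ?_⟩
  intro ω' hω'
  have hω'a : a < ω' := hω'.1
  exact hmono.injOn (Set.mem_Ici.mpr hω'a.le) (Set.mem_Ici.mpr hωa.le)
    (by rw [hω'.2, hωM])
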